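/- Let n ∈ ℕ, let A be an n×n real matrix with nonnegative entries satisfying A^{m+1} = 0, and for k = 0,…,m set n_k = 𝟙ᵀA^k𝟙 (the sum of all entries of A^k, so n_0 = n). Then for every c ∈ ℝ, the characteristic polynomial of B = 𝟙𝟙ᵀ + c·A satisfies det(λI − B) = λ^{n−(m+1)}·(λ^{m+1} − Σ_{k=0}^{m} n_k·c^k·λ^{m−k}) as polynomials in λ. Moreover, if c < 0 and n_m > 0, then every real root of the polynomial λ^{m+1} − Σ_{k=0}^{m} n_k·c^k·λ^{m−k} is positive. -/

import Mathlib

set_option synthInstance.maxHeartbeats 1000000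
set_option maxHeartbeats 2000000

/-- Characteristic polynomial of `𝟙𝟙ᵀ + c·A` for a nilpotent nonnegative matrix `A`
(e.g. the adjacency matrix of a DAG with maximum path length `m`), and positivity of the
real roots of the nontrivial factor when `c < 0` and `n_m > 0`. -/
theorem stmt_7 (n m : ℕ) (hm : m + 1 ≤ n)
    (A : Matrix (Fin n) (Fin n) ℝ)
    (hA : ∀ i j, 0 ≤ A i j) (hnil : A ^ (m + 1) = 0) (c : ℝ) :
    (Matrix.charpoly (Matrix.of (fun _ _ => (1 : ℝ)) + c • A) =
      Polynomial.X ^ (n - (m + 1)) *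
        (Polynomial.X ^ (m + 1) - ∑ k ∈ Finset.range (m + 1),
          Polynomial.C ((∑ i, ∑ j, (A ^ k) i j) * c ^ k) * Polynomial.X ^ (m - k))) ∧
    ((c < 0 ∧ 0 < ∑ i, ∑ j, (A ^ m) i j) →
      ∀ lam : ℝ,
        lam ^ (m + 1) -
          (∑ k ∈ Finset.range (m + 1), (∑ i, ∑ j, (A ^ k) i j) * c ^ k * lam ^ (m - k)) = 0 →
        0 < lam) := by
  open Polynomial Matrix in
  constructor
  ·
    set φ : ℝ[X] →+* (RatFunc ℝ) := (algebraMap ℝ[X] (RatFunc ℝ) : ℝ[X] →+* (RatFunc ℝ)) with hφ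
    apply RatFunc.algebraMap_injective ℝ
    set x : (RatFunc ℝ) := φ X with hxdef
    have hx : x ≠ 0 := RatFunc.algebraMap_ne_zero Polynomial.X_ne_zero
    set ψ : ℝ →+* (RatFunc ℝ) := φ.comp Polynomial.C with hψ
    set A' : Matrix (Fin n) (Fin n) (RatFunc ℝ) := A.map ψ with hA'
    have hA'pow : ∀ k, A' ^ k = (A ^ k).map ψ := by
      intro k
      rw [hA', ← RingHom.mapMatrix_apply, ← RingHom.mapMatrix_apply, ← map_pow]
    have hA'nil : A' ^ (m + 1) = 0 := by
      rw [hA'pow, hnil]; ext i j; simp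
    set u : Fin n → (RatFunc ℝ) := fun _ => 1 with hu
    set D : Matrix (Fin n) (Fin n) (RatFunc ℝ) := x • (1 : Matrix (Fin n) (Fin n) (RatFunc ℝ)) - ψ c • A' with hD
    set S : Matrix (Fin n) (Fin n) (RatFunc ℝ) :=
      ∑ k ∈ Finset.range (m + 1), (ψ c ^ k * x⁻¹ ^ (k + 1)) • A' ^ k with hS
    -- D * S = 1
    have hDS : D * S = 1 := by
      have : D * S = ∑ k ∈ Finset.range (m + 1),
          ((ψ c ^ k * x⁻¹ ^ k) • A' ^ k - (ψ c ^ (k+1) * x⁻¹ ^ (k+1)) • A' ^ (k+1)) := by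
        rw [hS, Finset.mul_sum]
        refine Finset.sum_congr rfl fun k _ => ?_
        have h1 : (ψ c ^ k * x⁻¹ ^ (k + 1)) * x = ψ c ^ k * x⁻¹ ^ k := by
          rw [pow_succ, mul_assoc, mul_assoc, inv_mul_cancel₀ hx, mul_one]
        have h2 : (ψ c ^ k * x⁻¹ ^ (k + 1)) * ψ c = ψ c ^ (k + 1) * x⁻¹ ^ (k + 1) := by
          rw [pow_succ]; ring
        rw [Matrix.mul_smul, hD, Matrix.sub_mul, Matrix.smul_mul, Matrix.smul_mul, one_mul,
          smul_sub, smul_smul, smul_smul, h1, h2, ← pow_succ']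
      rw [this, Finset.sum_range_sub' (fun k => (ψ c ^ k * x⁻¹ ^ k) • A' ^ k)]
      simp [hA'nil]
    have hUdet : IsUnit D.det := Matrix.isUnit_det_of_right_inverse hDS
    have hDinv : D⁻¹ = S := Matrix.inv_eq_right_inv hDS
    -- det D = x ^ n
    have hDmap : D = (Matrix.charmatrix (c • A)).map φ := by
      ext i j
      by_cases h : i = j
      · subst h
        simp [hD, Matrix.charmatrix_apply_eq, Matrix.map_apply, Matrix.sub_apply,
          Matrix.smul_apply, Matrix.one_apply_eq, hA', hψ, smul_eq_mul, _root_.map_mul]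
        exact hxdef
      · simp [hD, Matrix.charmatrix_apply_ne _ _ _ h, Matrix.map_apply, Matrix.sub_apply,
          Matrix.smul_apply, Matrix.one_apply_ne h, hA', hψ, smul_eq_mul, _root_.map_mul]
    have hcAnil : IsNilpotent (c • A) := ⟨m + 1, by rw [_root_.smul_pow, hnil, smul_zero]⟩
    have hcp : Matrix.charpoly (c • A) = X ^ n := by
      have h2 := Matrix.isNilpotent_charpoly_sub_pow_of_isNilpotent hcAnil
      have h3 : Matrix.charpoly (c • A) - X ^ (Fintype.card (Fin n)) = 0 := h2.eq_zero
      rw [sub_eq_zero] at h3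
      simpa using h3
    have hdetD : D.det = x ^ n := by
      rw [hDmap, ← RingHom.mapMatrix_apply, ← RingHom.map_det,
        show (Matrix.charmatrix (c • A)).det = Matrix.charpoly (c • A) from rfl, hcp, map_pow]
    have hφC : ∀ r : ℝ, φ (Polynomial.C r) = ψ r := fun r => rfl
    set r : ℕ → ℝ := fun k => (∑ i, ∑ j, (A ^ k) i j) * c ^ k with hr
    set B : Matrix (Fin n) (Fin n) ℝ := Matrix.of (fun _ _ => (1 : ℝ)) + c • A with hB
    have hBmap : (Matrix.charmatrix B).map φ = D + Matrix.replicateCol Unit (-u) * Matrix.replicateRow Unit u := by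
      ext i j
      have hcr : (Matrix.replicateCol Unit (-u) * Matrix.replicateRow Unit u) i j = -1 := by
        simp [Matrix.mul_apply, Matrix.replicateCol_apply, Matrix.replicateRow_apply, hu]
      by_cases h : i = j
      · subst h
        simp only [hB, Matrix.charmatrix_apply_eq, Matrix.map_apply, Matrix.add_apply, hcr,
          Matrix.sub_apply, Matrix.smul_apply, Matrix.one_apply_eq, hD, hA', Matrix.of_apply,
          smul_eq_mul, map_sub, _root_.map_mul, _root_.map_add, _root_.map_one, hφC]
        ring
      · simp only [hB, Matrix.charmatrix_apply_ne _ _ _ h, Matrix.map_apply, Matrix.add_apply, hcr,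
          Matrix.sub_apply, Matrix.smul_apply, Matrix.one_apply_ne h, hD, hA', Matrix.of_apply,
          smul_eq_mul, map_neg, _root_.map_mul, _root_.map_add, _root_.map_one, hφC]
        ring
    have hSsum : ∀ i j, S i j = ∑ k ∈ Finset.range (m + 1),
        (ψ c ^ k * x⁻¹ ^ (k + 1)) * ψ ((A ^ k) i j) := by
      intro i j
      rw [hS]
      simp [Matrix.sum_apply, Matrix.smul_apply, hA'pow, Matrix.map_apply, smul_eq_mul]
    have hsumS : ∑ j, ∑ i, S i j = ∑ k ∈ Finset.range (m + 1),
        ψ (r k) * x⁻¹ ^ (k + 1) := by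
      simp only [hSsum]
      calc ∑ j, ∑ i, ∑ k ∈ Finset.range (m + 1), (ψ c ^ k * x⁻¹ ^ (k + 1)) * ψ ((A ^ k) i j)
          = ∑ j, ∑ k ∈ Finset.range (m + 1), ∑ i, (ψ c ^ k * x⁻¹ ^ (k + 1)) * ψ ((A ^ k) i j) :=
            Finset.sum_congr rfl fun j _ => Finset.sum_comm
        _ = ∑ k ∈ Finset.range (m + 1), ∑ j, ∑ i, (ψ c ^ k * x⁻¹ ^ (k + 1)) * ψ ((A ^ k) i j) :=
            Finset.sum_comm
        _ = ∑ k ∈ Finset.range (m + 1), ∑ i, ∑ j, (ψ c ^ k * x⁻¹ ^ (k + 1)) * ψ ((A ^ k) i j) :=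
            Finset.sum_congr rfl fun k _ => Finset.sum_comm
        _ = ∑ k ∈ Finset.range (m + 1), ψ (r k) * x⁻¹ ^ (k + 1) := by
            refine Finset.sum_congr rfl fun k _ => ?_
            simp only [hr, ← Finset.mul_sum, _root_.map_mul, map_pow, map_sum]
            ring
    have hentry : (Matrix.replicateRow Unit u * D⁻¹ * Matrix.replicateCol Unit (-u)) PUnit.unit PUnit.unit
        = -∑ k ∈ Finset.range (m + 1), ψ (r k) * x⁻¹ ^ (k + 1) := by
      rw [hDinv, ← hsumS]
      simp [Matrix.mul_apply, Matrix.replicateRow_apply, Matrix.replicateCol_apply, hu, Finset.sum_mul]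
    have hmain : φ (Matrix.charpoly B) = x ^ n * (1 - ∑ k ∈ Finset.range (m + 1),
        ψ (r k) * x⁻¹ ^ (k + 1)) := by
      rw [Matrix.charpoly, RingHom.map_det, RingHom.mapMatrix_apply, hBmap,
        Matrix.det_add_replicateCol_mul_replicateRow hUdet, hdetD]
      congr 1
      rw [Matrix.det_unique, Matrix.add_apply, Matrix.one_apply_eq]
      rw [show (default : Unit) = PUnit.unit from rfl, hentry]
      ring
    rw [hmain]
    -- φ of the RHS
    simp only [_root_.map_mul, map_pow, map_sub, map_sum, hφC, ← hxdef]
    rw [mul_sub, mul_sub, mul_one, Finset.mul_sum, Finset.mul_sum,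
      show x ^ (n - (m + 1)) * x ^ (m + 1) = x ^ n from by
        rw [← pow_add, Nat.sub_add_cancel hm]]
    congr 1
    refine Finset.sum_congr rfl fun k hk => ?_
    rw [Finset.mem_range] at hk
    calc x ^ n * (ψ (r k) * x⁻¹ ^ (k + 1))
        = ψ (r k) * (x ^ n * (x ^ (k + 1))⁻¹) := by rw [inv_pow]; ring
      _ = ψ (r k) * x ^ (n - (k + 1)) := by
          rw [← pow_sub₀ x hx (by omega : k + 1 ≤ n)]
      _ = x ^ (n - (m + 1)) * (ψ (r k) * x ^ (m - k)) := by
          rw [mul_comm (x ^ (n - (m + 1))), mul_assoc, ← pow_add]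
          congr 2
          omega
      _ = x ^ (n - (m + 1)) * ((∑ i, ∑ j, ψ ((A ^ k) i j)) * ψ c ^ k * x ^ (m - k)) := by
          simp only [hr, _root_.map_mul, map_pow, map_sum]
  ·
    rintro ⟨hc, hnm⟩ lam heq
    set nk : ℕ → ℝ := fun k => ∑ i, ∑ j, (A ^ k) i j with hnkdef
    have hpow : ∀ k (i j : Fin n), 0 ≤ (A ^ k) i j := by
      intro k
      induction k with
      | zero => intro i j; rw [pow_zero, Matrix.one_apply]; split <;> norm_num
      | succ k ih =>
        intro i j
        rw [pow_succ, Matrix.mul_apply]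
        exact Finset.sum_nonneg fun l _ => mul_nonneg (ih i l) (hA l j)
    have hnk : ∀ k, 0 ≤ nk k := fun k =>
      Finset.sum_nonneg fun i _ => Finset.sum_nonneg fun j _ => hpow k i j
    by_contra hlam
    push_neg at hlam
    rcases lt_or_eq_of_le hlam with h0 | h0
    · -- lam < 0
      have hT : 0 ≤ ∑ k ∈ Finset.range (m + 1), nk k * (-c) ^ k * (-lam) ^ (m - k) :=
        Finset.sum_nonneg fun k _ => mul_nonneg (mul_nonneg (hnk k)
          (pow_nonneg (by linarith) k)) (pow_nonneg (by linarith) _)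
      have hkey : ∀ k ∈ Finset.range (m + 1),
          nk k * c ^ k * lam ^ (m - k)
            = (-1 : ℝ) ^ m * (nk k * (-c) ^ k * (-lam) ^ (m - k)) := by
        intro k hk
        rw [Finset.mem_range] at hk
        have e1 : k + (m - k) = m := by omega
        have e2 : ((-1 : ℝ)) ^ m * ((-1 : ℝ) ^ k * (-1 : ℝ) ^ (m - k)) = 1 := by
          rw [← pow_add, e1, ← pow_add, show m + m = 2 * m from by ring, pow_mul]
          norm_num
        calc nk k * c ^ k * lam ^ (m - k)
            = ((-1 : ℝ)) ^ m * ((-1 : ℝ) ^ k * (-1 : ℝ) ^ (m - k))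
                * (nk k * c ^ k * lam ^ (m - k)) := by rw [e2, one_mul]
          _ = (-1 : ℝ) ^ m * (nk k * (-c) ^ k * (-lam) ^ (m - k)) := by
              rw [neg_pow c, neg_pow lam]; ring
      rw [Finset.sum_congr rfl hkey, ← Finset.mul_sum] at heq
      have hl : lam ^ (m + 1) = -((-1 : ℝ) ^ m * (-lam) ^ (m + 1)) := by
        rw [neg_pow lam, ← mul_assoc, ← pow_add,
          show m + (m + 1) = 2 * m + 1 from by ring,
          show ((-1 : ℝ)) ^ (2 * m + 1) = -1 from by rw [pow_succ, pow_mul]; norm_num]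
        ring
      rw [hl] at heq
      have hP : 0 < (-lam) ^ (m + 1) := pow_pos (by linarith) _
      set s : ℝ := (-1 : ℝ) ^ m with hs
      have hse : s * ((-lam) ^ (m + 1)
          + ∑ k ∈ Finset.range (m + 1), nk k * (-c) ^ k * (-lam) ^ (m - k)) = 0 := by
        rw [mul_add]; linarith
      have hs0 : s ≠ 0 := by
        intro h
        have : s * s = 1 := by
          rw [hs, ← pow_add, show m + m = 2 * m from by ring, pow_mul]; norm_num
        rw [h] at this; norm_num at this
      rcases mul_eq_zero.mp hse with h | h
      · exact hs0 h
      · linarith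
    · -- lam = 0
      subst h0
      have hsum : (∑ k ∈ Finset.range (m + 1), nk k * c ^ k * (0:ℝ) ^ (m - k))
          = nk m * c ^ m := by
        rw [Finset.sum_eq_single_of_mem m (Finset.self_mem_range_succ m)]
        · rw [show m - m = 0 from by omega, pow_zero, mul_one]
        · intro k hk hkm
          rw [Finset.mem_range] at hk
          rw [zero_pow (show m - k ≠ 0 from by omega), mul_zero]
      rw [hsum, zero_pow (Nat.succ_ne_zero m), zero_sub, neg_eq_zero] at heq
      exact mul_ne_zero (ne_of_gt hnm) (pow_ne_zero m (ne_of_lt hc)) heq
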